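/- For every v ∈ ℝ^d and every symmetric trace-free real d×d matrix u, one has (1/2)|v|² ≤ e(v,u), with equality if and only if u = v ⊗ v − (|v|²/d)·I_d, where I_d is the d×d identity matrix. In particular e(v,u) ≥ 0. -/

import Mathlib

open scoped BigOperators

namespace HGEaux

variable {d : ℕ}

/-- The quadratic form. -/
noncomputable def q (M : Matrix (Fin d) (Fin d) ℝ) (x : EuclideanSpace ℝ (Fin d)) : ℝ :=
  ∑ i, ∑ j, x i * M i j * x j

/-- The set over which the sup is taken. -/
def S (M : Matrix (Fin d) (Fin d) ℝ) : Set ℝ :=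
  {r : ℝ | ∃ x : EuclideanSpace ℝ (Fin d), ‖x‖ = 1 ∧ r = ∑ i, ∑ j, x i * M i j * x j}

lemma normsq (x : EuclideanSpace ℝ (Fin d)) : ∑ i, x i * x i = ‖x‖ ^ 2 := by
  rw [EuclideanSpace.norm_eq, Real.sq_sqrt (by positivity)]
  simp only [Real.norm_eq_abs, sq_abs, sq, abs_mul_abs_self]

lemma abs_coord_le (x : EuclideanSpace ℝ (Fin d)) (hx : ‖x‖ = 1) (i : Fin d) : |x i| ≤ 1 := by
  have h1 : x i * x i ≤ ∑ j, x j * x j :=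
    Finset.single_le_sum (f := fun j => x j * x j) (fun j _ => mul_self_nonneg _)
      (Finset.mem_univ i)
  rw [normsq, hx] at h1
  nlinarith [abs_nonneg (x i), sq_abs (x i)]

lemma bddAbove_S (M : Matrix (Fin d) (Fin d) ℝ) : BddAbove (S M) := by
  refine ⟨∑ i, ∑ j, |M i j|, ?_⟩
  rintro r ⟨x, hx, rfl⟩
  apply Finset.sum_le_sum; intro i _
  apply Finset.sum_le_sum; intro j _
  calc x i * M i j * x j ≤ |x i * M i j * x j| := le_abs_self _
    _ = |x i| * |M i j| * |x j| := by rw [abs_mul, abs_mul]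
    _ ≤ 1 * |M i j| * 1 := by
        have hi := abs_coord_le x hx i
        have hj := abs_coord_le x hx j
        exact mul_le_mul (mul_le_mul_of_nonneg_right hi (abs_nonneg _)) hj
          (abs_nonneg _) (by positivity)
    _ = |M i j| := by ring

lemma q_smul (M : Matrix (Fin d) (Fin d) ℝ) (c : ℝ) (x : EuclideanSpace ℝ (Fin d)) :
    q M (c • x) = c ^ 2 * q M x := by
  simp only [q, PiLp.smul_apply, smul_eq_mul, Finset.mul_sum]
  congr 1; ext i; congr 1; ext j; ring

lemma q_le_lam (M : Matrix (Fin d) (Fin d) ℝ) (x : EuclideanSpace ℝ (Fin d)) (hx : ‖x‖ = 1) :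
    q M x ≤ sSup (S M) := le_csSup (bddAbove_S M) ⟨x, hx, rfl⟩

lemma q_le_lam_sq (M : Matrix (Fin d) (Fin d) ℝ) (x : EuclideanSpace ℝ (Fin d)) :
    q M x ≤ sSup (S M) * ‖x‖ ^ 2 := by
  rcases eq_or_ne x 0 with rfl | hx
  · simp [q]
  · have hy : ‖(‖x‖⁻¹ • x)‖ = 1 := norm_smul_inv_norm hx
    have h := q_le_lam M _ hy
    rw [q_smul] at h
    have h2 : q M x = ‖x‖ ^ 2 * ((‖x‖⁻¹) ^ 2 * q M x) := by
      have hn : ‖x‖ ≠ 0 := norm_ne_zero_iff.mpr hx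
      field_simp
    rw [h2, mul_comm (sSup (S M))]
    exact mul_le_mul_of_nonneg_left h (by positivity)

lemma q_single (M : Matrix (Fin d) (Fin d) ℝ) (k : Fin d) :
    q M (EuclideanSpace.single k 1) = M k k := by
  simp [q, EuclideanSpace.single_apply, Finset.sum_ite_eq, Finset.mul_sum]

lemma diag_le_lam (M : Matrix (Fin d) (Fin d) ℝ) (k : Fin d) : M k k ≤ sSup (S M) := by
  have := q_le_lam M (EuclideanSpace.single k 1) (by simp)
  rwa [q_single] at this

lemma q_pair (M : Matrix (Fin d) (Fin d) ℝ) (i j : Fin d) (hij : i ≠ j) (ε : ℝ) :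
    q M (EuclideanSpace.single i 1 + ε • EuclideanSpace.single j (1:ℝ)) =
      M i i + ε * M i j + ε * M j i + ε ^ 2 * M j j := by
  simp [q, EuclideanSpace.single_apply, Finset.sum_add_distrib, Finset.mul_sum,
    add_mul, mul_add, Finset.sum_ite_eq, hij, hij.symm, mul_ite, ite_mul]
  ring

lemma norm_pair (i j : Fin d) (hij : i ≠ j) (ε : ℝ) :
    ‖(EuclideanSpace.single i 1 + ε • EuclideanSpace.single j (1:ℝ))‖ ^ 2 = 1 + ε ^ 2 := by
  rw [← normsq]
  simp [EuclideanSpace.single_apply, Finset.sum_add_distrib, add_mul, mul_add,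
    Finset.sum_ite_eq, hij, hij.symm, mul_ite, ite_mul]
  ring

lemma lam_scalar (hd : 0 < d) (c : ℝ) (M : Matrix (Fin d) (Fin d) ℝ)
    (hM : ∀ i j, M i j = if i = j then c else 0) : sSup (S M) = c := by
  have hS : S M = {c} := by
    ext r
    simp only [S, Set.mem_setOf_eq, Set.mem_singleton_iff]
    constructor
    · rintro ⟨x, hx, rfl⟩
      have h : ∀ i : Fin d, ∑ j, x i * M i j * x j = c * (x i * x i) := by
        intro i
        rw [Finset.sum_eq_single i]
        · rw [hM]; simp; ring
        · intro b _ hb; rw [hM]; simp [Ne.symm hb]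
        · simp
      simp only [h, ← Finset.mul_sum]
      have hn : ∑ i, x i * x i = 1 := by rw [normsq, hx]; norm_num
      rw [hn, mul_one]
    · rintro rfl
      refine ⟨EuclideanSpace.single ⟨0, hd⟩ 1, by simp, ?_⟩
      simp only [hM]
      simp [EuclideanSpace.single_apply, Finset.sum_ite_eq, mul_ite, ite_mul]
  rw [hS, csSup_singleton]

end HGEaux

/-- The largest eigenvalue of a symmetric matrix `M`, defined as the supremum of
`xᵀ M x` over unit vectors `x ∈ ℝ^d`. -/
noncomputable def lambdaMax {d : ℕ} (M : Matrix (Fin d) (Fin d) ℝ) : ℝ :=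
  sSup {r : ℝ | ∃ x : EuclideanSpace ℝ (Fin d), ‖x‖ = 1 ∧ r = ∑ i, ∑ j, x i * M i j * x j}

/-- The generalised energy `e(v,u) = (d/2)·λ_max(v ⊗ v − u)`. -/
noncomputable def genE {d : ℕ} (v : EuclideanSpace ℝ (Fin d))
    (u : Matrix (Fin d) (Fin d) ℝ) : ℝ :=
  (d : ℝ) / 2 * lambdaMax (Matrix.of fun i j => v i * v j - u i j)

/-- For every `v ∈ ℝ^d` and every symmetric trace-free `u`, one has
`(1/2)|v|² ≤ e(v,u)`, with equality iff `u = v ⊗ v − (|v|²/d)·I_d`; in particular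
`e(v,u) ≥ 0`. -/
theorem half_normSq_le_genE {d : ℕ} (hd : 0 < d) (v : EuclideanSpace ℝ (Fin d))
    (u : Matrix (Fin d) (Fin d) ℝ) (hsymm : u.IsSymm) (htrace : u.trace = 0) :
    (1 / 2 : ℝ) * ‖v‖ ^ 2 ≤ genE v u ∧
    ((1 / 2 : ℝ) * ‖v‖ ^ 2 = genE v u ↔
      u = Matrix.of fun i j => v i * v j - ‖v‖ ^ 2 / d * (1 : Matrix (Fin d) (Fin d) ℝ) i j) ∧
    0 ≤ genE v u := by
  open HGEaux in
  set M : Matrix (Fin d) (Fin d) ℝ := Matrix.of fun i j => v i * v j - u i j with hM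
  have hdR : (0:ℝ) < d := by exact_mod_cast hd
  have hgen : genE v u = (d : ℝ) / 2 * sSup (HGEaux.S M) := rfl
  have hMapp : ∀ i j, M i j = v i * v j - u i j := fun i j => rfl
  have hMsymm : ∀ i j, M j i = M i j := by
    intro i j
    simp only [hMapp, hsymm.apply i j]
    ring
  have htr : ∑ k, M k k = ‖v‖ ^ 2 := by
    have h0 : ∑ k, u k k = 0 := htrace
    simp only [hMapp, Finset.sum_sub_distrib, h0, sub_zero, HGEaux.normsq]
  -- part 1
  have hsum : ‖v‖ ^ 2 ≤ (d : ℝ) * sSup (HGEaux.S M) := by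
    calc ‖v‖ ^ 2 = ∑ k, M k k := htr.symm
      _ ≤ ∑ _k : Fin d, sSup (HGEaux.S M) :=
          Finset.sum_le_sum fun k _ => HGEaux.diag_le_lam M k
      _ = (d : ℝ) * sSup (HGEaux.S M) := by
          rw [Finset.sum_const, Finset.card_univ, Fintype.card_fin, nsmul_eq_mul]
  have h1 : (1 / 2 : ℝ) * ‖v‖ ^ 2 ≤ genE v u := by
    rw [hgen]; linarith
  refine ⟨h1, ?_, le_trans (by positivity) h1⟩
  set c : ℝ := ‖v‖ ^ 2 / d with hc
  constructor
  · -- forward: equality implies u is the traceless part of v ⊗ v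
    intro heq
    have hlam : sSup (HGEaux.S M) = c := by
      rw [hgen] at heq
      rw [hc]
      field_simp
      nlinarith [hsum]
    -- diagonal entries all equal c
    have hdiag : ∀ k, M k k = c := by
      have hzero : ∑ k, (c - M k k) = 0 := by
        rw [Finset.sum_sub_distrib, htr, Finset.sum_const, Finset.card_univ,
          Fintype.card_fin, nsmul_eq_mul, hc]
        field_simp
        ring
      have hnn : ∀ k ∈ Finset.univ, (0:ℝ) ≤ c - M k k := by
        intro k _
        have := HGEaux.diag_le_lam M k
        rw [hlam] at this
        linarith
      intro k
      have := (Finset.sum_eq_zero_iff_of_nonneg hnn).mp hzero k (Finset.mem_univ k)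
      linarith
    -- off-diagonal entries vanish
    have hoff : ∀ i j, i ≠ j → M i j = 0 := by
      intro i j hij
      have key : ∀ ε : ℝ, M i i + ε * M i j + ε * M j i + ε ^ 2 * M j j ≤
          sSup (HGEaux.S M) * (1 + ε ^ 2) := by
        intro ε
        have := HGEaux.q_le_lam_sq M
          (EuclideanSpace.single i 1 + ε • EuclideanSpace.single j (1:ℝ))
        rwa [HGEaux.q_pair M i j hij, HGEaux.norm_pair i j hij] at this
      have k1 := key 1
      have k2 := key (-1)
      rw [hlam, hdiag i, hdiag j, hMsymm i j] at k1 k2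
      have : M i j ≤ 0 := by nlinarith
      have : 0 ≤ M i j := by nlinarith
      linarith
    ext i j
    have huij : u i j = v i * v j - M i j := by rw [hMapp]; ring
    rcases eq_or_ne i j with rfl | hij
    · simp [huij, hdiag i, Matrix.one_apply, hc]
    · simp [huij, hoff i j hij, Matrix.one_apply_ne hij]
  · -- backward: the specific u gives equality
    intro hu
    have hMs : ∀ i j, M i j = if i = j then c else 0 := by
      intro i j
      rw [hMapp, hu]
      rcases eq_or_ne i j with rfl | hij
      · simp [Matrix.one_apply, hc]
      · simp [Matrix.one_apply_ne hij, hij]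
    have := HGEaux.lam_scalar hd c M hMs
    rw [hgen, this, hc]
    field_simp
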